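/- For all integers a ≥ 1 and b ≥ 0, the characteristic polynomial of the 3×3 integer matrix with rows (0,1,0), (0,0,1), (1,(a+2)(b+2)−3,3−(a+2)(b+3)) equals X³ + ((a+2)(b+3)−3)X² − ((a+2)(b+2)−3)X − 1; it is irreducible over ℚ and has three distinct real roots. -/

import Mathlib

open Matrix Polynomial

lemma aux_charpoly (A B : ℤ) :
    (!![0, 1, 0; 0, 0, 1; 1, A, -B] : Matrix (Fin 3) (Fin 3) ℤ).charpoly
      = X ^ 3 + C B * X ^ 2 - C A * X - 1 := by
  rw [Matrix.charpoly, Matrix.det_fin_three]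
  simp [charmatrix_apply, Matrix.diagonal]
  ring

lemma aux_irred (A B : ℤ) (hA : 3 ≤ A) (hB : A + 3 ≤ B) :
    Irreducible ((X ^ 3 + C B * X ^ 2 - C A * X - 1 : ℤ[X]).map (Int.castRingHom ℚ)) := by
  set p : ℤ[X] := X ^ 3 + C B * X ^ 2 - C A * X - 1 with hp
  have hmon : p.Monic := by
    rw [hp]
    monicity!
  have hdeg : p.natDegree = 3 := by
    rw [hp]
    compute_degree!
  have hq : (p.map (Int.castRingHom ℚ)).natDegree = 3 := by
    rw [hmon.natDegree_map]; exact hdeg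
  rw [Polynomial.irreducible_iff_roots_eq_zero_of_degree_le_three (by omega) (by omega)]
  rw [Multiset.eq_zero_iff_forall_notMem]
  intro r hr
  have hq0 : p.map (Int.castRingHom ℚ) ≠ 0 := (hmon.map _).ne_zero
  have hroot : aeval r p = 0 := by
    have h2 := (Polynomial.mem_roots hq0).mp hr
    rw [Polynomial.IsRoot.def, Polynomial.eval_map] at h2
    rwa [Polynomial.aeval_def, algebraMap_int_eq]
  have hint : IsIntegral ℤ r := ⟨p, hmon, hroot⟩
  obtain ⟨m, hm⟩ := IsIntegrallyClosed.isIntegral_iff.mp hint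
  rw [← hm, aeval_algebraMap_apply] at hroot
  have heval : aeval m p = 0 := by
    rw [algebraMap_int_eq] at hroot
    have : ((aeval m p : ℤ) : ℚ) = 0 := hroot
    exact_mod_cast this
  have heval' : m ^ 3 + B * m ^ 2 - A * m - 1 = 0 := by
    simpa [hp] using heval
  have hdvd : m ∣ 1 := ⟨m ^ 2 + B * m - A, by linarith⟩
  rcases Int.isUnit_iff.mp (isUnit_of_dvd_one hdvd) with h1 | h1 <;> subst h1 <;> nlinarith

lemma aux_roots (A B : ℤ) (hA : 3 ≤ A) (hB : A + 3 ≤ B) :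
    ∃ x y z : ℝ, x ≠ y ∧ x ≠ z ∧ y ≠ z ∧
      ((X ^ 3 + C B * X ^ 2 - C A * X - 1 : ℤ[X]).map (Int.castRingHom ℝ)).IsRoot x ∧
      ((X ^ 3 + C B * X ^ 2 - C A * X - 1 : ℤ[X]).map (Int.castRingHom ℝ)).IsRoot y ∧
      ((X ^ 3 + C B * X ^ 2 - C A * X - 1 : ℤ[X]).map (Int.castRingHom ℝ)).IsRoot z := by
  set q : ℝ[X] := (X ^ 3 + C B * X ^ 2 - C A * X - 1 : ℤ[X]).map (Int.castRingHom ℝ) with hq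
  have hev : ∀ x : ℝ, q.eval x = x ^ 3 + (B : ℝ) * x ^ 2 - (A : ℝ) * x - 1 := by
    intro x; simp [hq]
  have hA' : (3 : ℝ) ≤ (A : ℝ) := by exact_mod_cast hA
  have hB' : (A : ℝ) + 3 ≤ (B : ℝ) := by exact_mod_cast hB
  have hcont : ∀ s : Set ℝ, ContinuousOn (fun x => q.eval x) s :=
    fun s => (Polynomial.continuous q).continuousOn
  -- root x in (-B-1, -B)
  have h1 : q.eval (-(B : ℝ) - 1) < 0 := by rw [hev]; nlinarith
  have h2 : 0 < q.eval (-(B : ℝ)) := by rw [hev]; nlinarith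
  have h3 : q.eval (0 : ℝ) < 0 := by rw [hev]; norm_num
  have h4 : 0 < q.eval (1 : ℝ) := by rw [hev]; nlinarith
  obtain ⟨x, hx, hxr⟩ := intermediate_value_Ioo (by linarith : -(B : ℝ) - 1 ≤ -(B : ℝ))
    (hcont _) (Set.mem_Ioo.mpr ⟨h1, h2⟩)
  obtain ⟨y, hy, hyr⟩ := intermediate_value_Ioo' (by linarith : -(B : ℝ) ≤ (0 : ℝ))
    (hcont _) (Set.mem_Ioo.mpr ⟨h3, h2⟩)
  obtain ⟨z, hz, hzr⟩ := intermediate_value_Ioo (by linarith : (0 : ℝ) ≤ (1 : ℝ))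
    (hcont _) (Set.mem_Ioo.mpr ⟨h3, h4⟩)
  exact ⟨x, y, z, by intro h; rw [h] at hx; exact absurd hx.2 (not_lt.mpr hy.1.le),
    by intro h; rw [h] at hx; exact absurd hx.2 (by linarith [hz.1]),
    by intro h; rw [h] at hy; exact absurd hy.2 (not_lt.mpr hz.1.le), hxr, hyr, hzr⟩

/-- An integer polynomial has three distinct real roots. -/
def hasThreeDistinctRealRoots (p : Polynomial ℤ) : Prop :=
  ∃ x y z : ℝ, x ≠ y ∧ x ≠ z ∧ y ≠ z ∧
    (p.map (Int.castRingHom ℝ)).IsRoot x ∧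
    (p.map (Int.castRingHom ℝ)).IsRoot y ∧
    (p.map (Int.castRingHom ℝ)).IsRoot z

theorem charpoly_quadrilateral_family (a b : ℤ) (ha : 1 ≤ a) (hb : 0 ≤ b) :
    (!![0, 1, 0; 0, 0, 1; 1, (a + 2) * (b + 2) - 3, 3 - (a + 2) * (b + 3)] :
        Matrix (Fin 3) (Fin 3) ℤ).charpoly
      = X ^ 3 + C ((a + 2) * (b + 3) - 3) * X ^ 2 - C ((a + 2) * (b + 2) - 3) * X - 1 ∧
    Irreducible
      (((!![0, 1, 0; 0, 0, 1; 1, (a + 2) * (b + 2) - 3, 3 - (a + 2) * (b + 3)] :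
          Matrix (Fin 3) (Fin 3) ℤ).charpoly).map (Int.castRingHom ℚ)) ∧
    hasThreeDistinctRealRoots
      (!![0, 1, 0; 0, 0, 1; 1, (a + 2) * (b + 2) - 3, 3 - (a + 2) * (b + 3)] :
        Matrix (Fin 3) (Fin 3) ℤ).charpoly := by
  set A : ℤ := (a + 2) * (b + 2) - 3 with hA
  set B : ℤ := (a + 2) * (b + 3) - 3 with hB
  have hA3 : 3 ≤ A := by nlinarith
  have hAB : A + 3 ≤ B := by nlinarith
  have hmat : (!![0, 1, 0; 0, 0, 1; 1, (a + 2) * (b + 2) - 3, 3 - (a + 2) * (b + 3)] :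
      Matrix (Fin 3) (Fin 3) ℤ) = !![0, 1, 0; 0, 0, 1; 1, A, -B] := by
    ext i j; fin_cases i <;> fin_cases j <;> simp [hA, hB] <;> ring
  rw [hmat, aux_charpoly A B]
  exact ⟨rfl, aux_irred A B hA3 hAB, aux_roots A B hA3 hAB⟩
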